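/- If the infimum value of a linear function cᵀ x over a nonempty rational generalized polyhedron Q = {x : A x ≥ a, B x > b} is finite, then it equals the infimum of cᵀ x over the closure {x : A x ≥ a, B x ≥ b}, and in particular this common value is rational. -/

import Mathlib

lemma exists_sep (lows ups : List ℝ) (h : ∀ l ∈ lows, ∀ u ∈ ups, l ≤ u) :
    ∃ s : ℝ, (∀ l ∈ lows, l ≤ s) ∧ ∀ u ∈ ups, s ≤ u := by
  induction lows with
  | nil =>
    clear h
    induction ups with
    | nil => exact ⟨0, by simp, by simp⟩
    | cons u rest ih =>
      obtain ⟨s, -, hs⟩ := ih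
      refine ⟨min u s, by simp, ?_⟩
      intro u' hu'
      rcases List.mem_cons.1 hu' with h | h
      · subst h; exact min_le_left _ _
      · exact le_trans (min_le_right _ _) (hs _ h)
  | cons l rest ih =>
    obtain ⟨s, h1, h2⟩ := ih (fun l' hl' u hu => h l' (List.mem_cons_of_mem _ hl') u hu)
    refine ⟨max l s, ?_, ?_⟩
    · intro l' hl'
      rcases List.mem_cons.1 hl' with h | h
      · subst h; exact le_max_left _ _
      · exact le_trans (h1 _ h) (le_max_right _ _)
    · intro u hu
      exact max_le (h l List.mem_cons_self u hu) (h2 u hu)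

section FM
variable {ι : Type} [Fintype ι] [DecidableEq ι]

abbrev Cst (ι : Type) : Type := ℚ × (ι → ℚ) × ℚ

def holdsC (p : Cst ι) (t : ℝ) (x : ι → ℝ) : Prop :=
  ((p.2.2 : ℝ)) ≤ (p.1 : ℝ) * t + ∑ j, (p.2.1 j : ℝ) * x j

def SatL (L : List (Cst ι)) (t : ℝ) (x : ι → ℝ) : Prop := ∀ p ∈ L, holdsC p t x

def elim0 (i₀ : ι) (p : Cst ι) : Cst {j : ι // j ≠ i₀} :=
  (p.1, fun j => p.2.1 j.1, p.2.2)

def elimPair (i₀ : ι) (p q : Cst ι) : Cst {j : ι // j ≠ i₀} :=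
  (p.2.1 i₀ * q.1 - q.2.1 i₀ * p.1,
   fun j => p.2.1 i₀ * q.2.1 j.1 - q.2.1 i₀ * p.2.1 j.1,
   p.2.1 i₀ * q.2.2 - q.2.1 i₀ * p.2.2)

def elimL (i₀ : ι) (L : List (Cst ι)) : List (Cst {j : ι // j ≠ i₀}) :=
  (L.filter (fun p => decide (p.2.1 i₀ = 0))).map (elim0 i₀) ++
  ((L ×ˢ L).filter
    (fun pq => decide (0 < pq.1.2.1 i₀ ∧ pq.2.2.1 i₀ < 0))).map
      (fun pq => elimPair i₀ pq.1 pq.2)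

def extV (i₀ : ι) (y : {j : ι // j ≠ i₀} → ℝ) (s : ℝ) : ι → ℝ :=
  fun j => if h : j = i₀ then s else y ⟨j, h⟩

lemma sum_extV (i₀ : ι) (v : ι → ℚ) (y : {j : ι // j ≠ i₀} → ℝ) (s : ℝ) :
    ∑ j, (v j : ℝ) * extV i₀ y s j
      = (v i₀ : ℝ) * s + ∑ j : {j : ι // j ≠ i₀}, (v j.1 : ℝ) * y j := by
  rw [← Finset.sum_erase_add _ _ (Finset.mem_univ i₀)]
  rw [Finset.sum_subtype (Finset.univ.erase i₀)
    (p := fun j => j ≠ i₀) (by simp) (fun j => (v j : ℝ) * extV i₀ y s j)]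
  have h1 : extV i₀ y s i₀ = s := by simp [extV]
  have h2 : ∀ j : {j : ι // j ≠ i₀}, extV i₀ y s j.1 = y j := by
    intro j; simp [extV, j.2]
  simp only [h1, h2]
  ring

lemma elimL_correct (i₀ : ι) (L : List (Cst ι)) (t : ℝ) (y : {j : ι // j ≠ i₀} → ℝ) :
    SatL (elimL i₀ L) t y ↔ ∃ s : ℝ, SatL L t (extV i₀ y s) := by
  set S : Cst ι → ℝ := fun p => ∑ j : {j : ι // j ≠ i₀}, (p.2.1 j.1 : ℝ) * y j with hS
  have sumsub : ∀ (p q : Cst ι),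
      ∑ j : {j : ι // j ≠ i₀},
          ((p.2.1 i₀ * q.2.1 j.1 - q.2.1 i₀ * p.2.1 j.1 : ℚ) : ℝ) * y j
        = (p.2.1 i₀ : ℝ) * S q - (q.2.1 i₀ : ℝ) * S p := by
    intro p q
    simp only [hS, Finset.mul_sum, ← Finset.sum_sub_distrib]
    apply Finset.sum_congr rfl
    intro j _
    push_cast
    ring
  constructor
  · -- from satisfied eliminated system, construct s
    intro hL'
    set lows : List ℝ := (L.filter (fun p => decide (0 < p.2.1 i₀))).map
      (fun p => ((p.2.2 : ℝ) - (p.1 : ℝ) * t - S p) / (p.2.1 i₀ : ℝ)) with hlows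
    set ups : List ℝ := (L.filter (fun p => decide (p.2.1 i₀ < 0))).map
      (fun p => ((p.2.2 : ℝ) - (p.1 : ℝ) * t - S p) / (p.2.1 i₀ : ℝ)) with hups
    have hsep : ∀ l ∈ lows, ∀ u ∈ ups, l ≤ u := by
      intro l hl u hu
      rw [hlows, List.mem_map] at hl
      obtain ⟨p, hpmem, rfl⟩ := hl
      rw [List.mem_filter, decide_eq_true_eq] at hpmem
      obtain ⟨hpL, hap⟩ := hpmem
      rw [hups, List.mem_map] at hu
      obtain ⟨q, hqmem, rfl⟩ := hu
      rw [List.mem_filter, decide_eq_true_eq] at hqmem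
      obtain ⟨hqL, haq⟩ := hqmem
      have hmem : elimPair i₀ p q ∈ elimL i₀ L := by
        apply List.mem_append_right
        apply List.mem_map.2
        exact ⟨(p, q), List.mem_filter.2 ⟨List.mem_product.2 ⟨hpL, hqL⟩,
          by simp [hap, haq]⟩, rfl⟩
      have hcomb := hL' _ hmem
      unfold holdsC elimPair at hcomb
      simp only at hcomb
      rw [sumsub p q] at hcomb
      push_cast at hcomb
      have hap' : (0 : ℝ) < (p.2.1 i₀ : ℝ) := by exact_mod_cast hap
      have haq' : ((q.2.1 i₀ : ℚ) : ℝ) < 0 := by exact_mod_cast haq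
      have hl2 : ((p.2.2 : ℝ) - (p.1 : ℝ) * t - S p) / (p.2.1 i₀ : ℝ) * (p.2.1 i₀ : ℝ)
          = (p.2.2 : ℝ) - (p.1 : ℝ) * t - S p := div_mul_cancel₀ _ (ne_of_gt hap')
      have hu2 : ((q.2.2 : ℝ) - (q.1 : ℝ) * t - S q) / (q.2.1 i₀ : ℝ) * (q.2.1 i₀ : ℝ)
          = (q.2.2 : ℝ) - (q.1 : ℝ) * t - S q := div_mul_cancel₀ _ (ne_of_lt haq')
      nlinarith [hcomb, hl2, hu2, mul_pos hap' (neg_pos.2 haq')]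
    obtain ⟨s, hls, hus⟩ := exists_sep lows ups hsep
    refine ⟨s, ?_⟩
    intro p hp
    unfold holdsC
    rw [sum_extV]
    rcases lt_trichotomy (p.2.1 i₀) 0 with hneg | hzero | hpos
    · have hu : ((p.2.2 : ℝ) - (p.1 : ℝ) * t - S p) / (p.2.1 i₀ : ℝ) ∈ ups := by
        rw [hups, List.mem_map]
        exact ⟨p, List.mem_filter.2 ⟨hp, by simp [hneg]⟩, rfl⟩
      have := hus _ hu
      have hneg' : ((p.2.1 i₀ : ℚ) : ℝ) < 0 := by exact_mod_cast hneg
      rw [le_div_iff_of_neg hneg'] at this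
      linarith [this]
    · have hmem : elim0 i₀ p ∈ elimL i₀ L := by
        apply List.mem_append_left
        exact List.mem_map.2 ⟨p, List.mem_filter.2 ⟨hp, by simp [hzero]⟩, rfl⟩
      have h0 := hL' _ hmem
      unfold holdsC elim0 at h0
      simp only at h0
      rw [hzero]
      push_cast
      linarith [h0]
    · have hl : ((p.2.2 : ℝ) - (p.1 : ℝ) * t - S p) / (p.2.1 i₀ : ℝ) ∈ lows := by
        rw [hlows, List.mem_map]
        exact ⟨p, List.mem_filter.2 ⟨hp, by simp [hpos]⟩, rfl⟩
      have := hls _ hl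
      have hpos' : (0 : ℝ) < ((p.2.1 i₀ : ℚ) : ℝ) := by exact_mod_cast hpos
      rw [div_le_iff₀ hpos'] at this
      linarith [this]
  · -- forward: witness s gives eliminated system
    rintro ⟨s, hs⟩ p' hp'
    rcases List.mem_append.1 hp' with h0 | hpair
    · rw [List.mem_map] at h0
      obtain ⟨p, hpmem, rfl⟩ := h0
      rw [List.mem_filter, decide_eq_true_eq] at hpmem
      obtain ⟨hpL, hzero⟩ := hpmem
      have := hs p hpL
      unfold holdsC at this ⊢
      rw [sum_extV] at this
      unfold elim0
      simp only
      rw [hzero] at this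
      push_cast at this ⊢
      linarith [this]
    · rw [List.mem_map] at hpair
      obtain ⟨⟨p, q⟩, hmem, rfl⟩ := hpair
      rw [List.mem_filter, decide_eq_true_eq] at hmem
      obtain ⟨hmemL, hap, haq⟩ := hmem
      rw [List.mem_product] at hmemL
      have h1 := hs p hmemL.1
      have h2 := hs q hmemL.2
      unfold holdsC at h1 h2 ⊢
      rw [sum_extV] at h1 h2
      unfold elimPair
      simp only
      rw [sumsub p q]
      have hap' : (0 : ℝ) < (p.2.1 i₀ : ℝ) := by exact_mod_cast hap
      have haq' : ((q.2.1 i₀ : ℚ) : ℝ) < 0 := by exact_mod_cast haq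
      push_cast
      nlinarith [mul_le_mul_of_nonneg_left h1 (neg_nonneg.2 (le_of_lt haq')),
        mul_le_mul_of_nonneg_left h2 (le_of_lt hap')]

end FM

lemma keyFM : ∀ (N : ℕ) (ι : Type) [Fintype ι] [DecidableEq ι], Fintype.card ι = N →
    ∀ L : List (Cst ι), {t : ℝ | ∃ x, SatL L t x}.Nonempty →
    BddBelow {t : ℝ | ∃ x, SatL L t x} →
    ∃ q : ℚ, IsLeast {t : ℝ | ∃ x, SatL L t x} (q : ℝ) := by
  intro N
  induction N with
  | zero =>
    intro ι _ _ hcard L hne hbdd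
    have hempty : IsEmpty ι := Fintype.card_eq_zero_iff.1 hcard
    have hred : ∀ (p : Cst ι) (t : ℝ) (x : ι → ℝ),
        holdsC p t x ↔ (p.2.2 : ℝ) ≤ (p.1 : ℝ) * t := by
      intro p t x
      unfold holdsC
      rw [Finset.univ_eq_empty, Finset.sum_empty, add_zero]
    obtain ⟨t₀, x₀, ht₀⟩ := hne
    have hq0 : ∀ p ∈ L, p.1 = 0 → p.2.2 ≤ 0 := by
      intro p hp h0
      have := (hred _ _ _).1 (ht₀ p hp)
      rw [h0] at this
      have h' : ((p.2.2 : ℚ) : ℝ) ≤ 0 := by push_cast at this; linarith [this]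
      exact_mod_cast h'
    by_cases hpos : ∃ p ∈ L, 0 < p.1
    · set G : Finset ℚ :=
        ((L.filter (fun p => decide (0 < p.1))).toFinset).image (fun p => p.2.2 / p.1) with hG
      have hGne : G.Nonempty := by
        obtain ⟨p, hpL, hp⟩ := hpos
        exact ⟨p.2.2 / p.1, Finset.mem_image.2 ⟨p, by
          rw [List.mem_toFinset, List.mem_filter, decide_eq_true_eq]
          exact ⟨hpL, hp⟩, rfl⟩⟩
      set q := G.max' hGne with hqdef
      obtain ⟨p', hp'G, hq⟩ := Finset.mem_image.1 (G.max'_mem hGne)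
      rw [← hqdef] at hq
      rw [List.mem_toFinset, List.mem_filter, decide_eq_true_eq] at hp'G
      have hc' : (0 : ℝ) < (p'.1 : ℝ) := by exact_mod_cast hp'G.2
      have hlb : ∀ t ∈ {t : ℝ | ∃ x, SatL L t x}, (q : ℝ) ≤ t := by
        rintro t ⟨x, hx⟩
        have hh := (hred _ _ _).1 (hx p' hp'G.1)
        rw [← hq]
        push_cast
        rw [div_le_iff₀ hc']
        linarith [hh]
      refine ⟨q, ⟨fun _ => 0, ?_⟩, hlb⟩
      intro p hp
      rw [hred]
      rcases lt_trichotomy (p.1) 0 with hneg | hzero | hps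
      · have hneg' : ((p.1 : ℚ) : ℝ) < 0 := by exact_mod_cast hneg
        have ht0q : (q : ℝ) ≤ t₀ := hlb t₀ ⟨x₀, ht₀⟩
        have := (hred _ _ _).1 (ht₀ p hp)
        nlinarith [this, ht0q]
      · rw [hzero]
        push_cast
        have := hq0 p hp hzero
        exact_mod_cast by
          have : ((p.2.2 : ℚ) : ℝ) ≤ 0 := by exact_mod_cast this
          linarith [this]
      · have hle : p.2.2 / p.1 ≤ q := G.le_max' _ (Finset.mem_image.2 ⟨p, by
          rw [List.mem_toFinset, List.mem_filter, decide_eq_true_eq]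
          exact ⟨hp, hps⟩, rfl⟩)
        have hps' : (0 : ℝ) < (p.1 : ℝ) := by exact_mod_cast hps
        have hle' : ((p.2.2 / p.1 : ℚ) : ℝ) ≤ (q : ℝ) := by exact_mod_cast hle
        push_cast at hle'
        rw [div_le_iff₀ hps'] at hle'
        linarith [hle']
    · exfalso
      push_neg at hpos
      obtain ⟨bl, hbl⟩ := hbdd
      have hmem : min t₀ (bl - 1) ∈ {t : ℝ | ∃ x, SatL L t x} := by
        refine ⟨x₀, ?_⟩
        intro p hp
        rw [hred]
        have h1 := (hred _ _ _).1 (ht₀ p hp)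
        have h2 : (p.1 : ℝ) ≤ 0 := by exact_mod_cast hpos p hp
        nlinarith [h1, min_le_left t₀ (bl - 1)]
      have := hbl hmem
      have := min_le_right t₀ (bl - 1)
      linarith
  | succ N IH =>
    intro ι _ _ hcard L hne hbdd
    obtain ⟨i₀⟩ : Nonempty ι := Fintype.card_pos_iff.1 (by omega)
    have hcard' : Fintype.card {j : ι // j ≠ i₀} = N := by
      have h1 := Fintype.card_subtype_compl (fun j : ι => j = i₀)
      rw [Fintype.card_subtype_eq] at h1
      have h2 : Fintype.card {j : ι // j ≠ i₀} = Fintype.card {j : ι // ¬ j = i₀} := rfl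
      rw [h2, h1, hcard]
      omega
    have hsetEq : {t : ℝ | ∃ x, SatL L t x}
        = {t : ℝ | ∃ y, SatL (elimL i₀ L) t y} := by
      ext t
      constructor
      · rintro ⟨x, hx⟩
        refine ⟨fun j => x j.1, (elimL_correct i₀ L t _).2 ⟨x i₀, ?_⟩⟩
        have : extV i₀ (fun j : {j : ι // j ≠ i₀} => x j.1) (x i₀) = x := by
          funext j
          unfold extV
          by_cases h : j = i₀
          · subst h; simp
          · simp [h]
        rw [this]
        exact hx
      · rintro ⟨y, hy⟩
        obtain ⟨s, hs⟩ := (elimL_correct i₀ L t y).1 hy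
        exact ⟨_, hs⟩
    rw [hsetEq] at hne hbdd ⊢
    exact IH _ hcard' _ hne hbdd

/-- if the infimum of a rational linear function over a nonempty
rational generalized polyhedron Q = {x : A x ≥ a, B x > b} is finite, it equals
the infimum over the weak-inequality closure {x : A x ≥ a, B x ≥ b}, and this
common value is rational. -/
theorem stmt_17 {n m m' : ℕ}
    (A : Matrix (Fin m) (Fin n) ℚ) (B : Matrix (Fin m') (Fin n) ℚ)
    (a : Fin m → ℚ) (b : Fin m' → ℚ) (c : Fin n → ℚ)
    (Q : Set (Fin n → ℝ))
    (hQ : Q = {x | (fun i => (a i : ℝ)) ≤ (A.map ((↑·) : ℚ → ℝ)).mulVec x ∧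
                   ∀ i, (b i : ℝ) < (B.map ((↑·) : ℚ → ℝ)).mulVec x i})
    (hne : Q.Nonempty)
    (v : EReal)
    (hv : v = ⨅ x : {x : Fin n → ℝ // x ∈ Q},
      ((∑ j, (c j : ℝ) * (x : Fin n → ℝ) j : ℝ) : EReal))
    (hfin : v ≠ ⊤ ∧ v ≠ ⊥) :
    v = (⨅ x : {x : Fin n → ℝ //
          (fun i => (a i : ℝ)) ≤ (A.map ((↑·) : ℚ → ℝ)).mulVec x ∧
          (fun i => (b i : ℝ)) ≤ (B.map ((↑·) : ℚ → ℝ)).mulVec x},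
        ((∑ j, (c j : ℝ) * (x : Fin n → ℝ) j : ℝ) : EReal)) ∧
    ∃ q : ℚ, v = ((q : ℝ) : EReal) := by
  -- notation
  set P' : (Fin n → ℝ) → Prop := fun x =>
    (fun i => (a i : ℝ)) ≤ (A.map ((↑·) : ℚ → ℝ)).mulVec x ∧
    (fun i => (b i : ℝ)) ≤ (B.map ((↑·) : ℚ → ℝ)).mulVec x with hP'
  have hmvA : ∀ (x : Fin n → ℝ) (i : Fin m),
      (A.map ((↑·) : ℚ → ℝ)).mulVec x i = ∑ j, (A i j : ℝ) * x j := by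
    intro x i; simp [Matrix.mulVec, dotProduct, Matrix.map_apply]
  have hmvB : ∀ (x : Fin n → ℝ) (i : Fin m'),
      (B.map ((↑·) : ℚ → ℝ)).mulVec x i = ∑ j, (B i j : ℝ) * x j := by
    intro x i; simp [Matrix.mulVec, dotProduct, Matrix.map_apply]
  -- Q ⊆ P'
  have hQP : ∀ x ∈ Q, P' x := by
    intro x hx
    rw [hQ] at hx
    exact ⟨hx.1, fun i => le_of_lt (hx.2 i)⟩
  -- segment lemma
  have hseg : ∀ x, P' x → ∀ z ∈ Q, ∀ τ : ℝ, 0 < τ → τ ≤ 1 →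
      (fun j => x j + τ * (z j - x j)) ∈ Q := by
    intro x hx z hz τ hτ0 hτ1
    rw [hQ] at hz ⊢
    have key : ∀ (k : ℕ) (M : Matrix (Fin k) (Fin n) ℚ) (i : Fin k),
        ∑ j, (M i j : ℝ) * (x j + τ * (z j - x j))
          = (1 - τ) * (∑ j, (M i j : ℝ) * x j) + τ * (∑ j, (M i j : ℝ) * z j) := by
      intro k M i
      rw [Finset.mul_sum, Finset.mul_sum, ← Finset.sum_add_distrib]
      apply Finset.sum_congr rfl
      intro j _
      ring
    constructor
    · intro i
      have h1 : (a i : ℝ) ≤ ∑ j, (A i j : ℝ) * x j := by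
        have := hx.1 i; rwa [hmvA] at this
      have h2 : (a i : ℝ) ≤ ∑ j, (A i j : ℝ) * z j := by
        have := hz.1 i; rwa [hmvA] at this
      show (a i : ℝ) ≤ (A.map _).mulVec _ i
      rw [hmvA, key m A i]
      nlinarith [h1, h2]
    · intro i
      have h1 : (b i : ℝ) ≤ ∑ j, (B i j : ℝ) * x j := by
        have := hx.2 i; rwa [hmvB] at this
      have h2 : (b i : ℝ) < ∑ j, (B i j : ℝ) * z j := by
        have := hz.2 i; rwa [hmvB] at this
      show (b i : ℝ) < (B.map _).mulVec _ i
      rw [hmvB, key m' B i]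
      nlinarith [h1, h2]
  have hobj : ∀ (x z : Fin n → ℝ) (τ : ℝ),
      ∑ j, (c j : ℝ) * (x j + τ * (z j - x j))
        = (∑ j, (c j : ℝ) * x j) + τ * ((∑ j, (c j : ℝ) * z j) - ∑ j, (c j : ℝ) * x j) := by
    intro x z τ
    have h1 : ∀ j ∈ Finset.univ, (c j : ℝ) * (x j + τ * (z j - x j))
        = (c j : ℝ) * x j + (τ * ((c j : ℝ) * z j) - τ * ((c j : ℝ) * x j)) := by
      intro j _; ring
    rw [Finset.sum_congr rfl h1, Finset.sum_add_distrib, Finset.sum_sub_distrib,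
      ← Finset.mul_sum, ← Finset.mul_sum]
    ring
  obtain ⟨r, hr⟩ : ∃ r : ℝ, v = (r : EReal) := ⟨v.toReal, (EReal.coe_toReal hfin.1 hfin.2).symm⟩
  have hlowQ : ∀ x, x ∈ Q → r ≤ ∑ j, (c j : ℝ) * x j := by
    intro x hx
    have h1 : v ≤ ((∑ j, (c j : ℝ) * x j : ℝ) : EReal) := by
      rw [hv]; exact iInf_le _ (⟨x, hx⟩ : {x // x ∈ Q})
    rw [hr] at h1
    exact_mod_cast h1
  have hPlow : ∀ x, P' x → r ≤ ∑ j, (c j : ℝ) * x j := by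
    intro x hx
    by_contra hcon
    push_neg at hcon
    obtain ⟨z, hz⟩ := hne
    set Sx := ∑ j, (c j : ℝ) * x j with hSx
    set Sz := ∑ j, (c j : ℝ) * z j with hSz
    have hzr : r ≤ Sz := hlowQ z hz
    rcases le_or_gt (Sz - Sx) 0 with hd | hd
    · linarith
    · set τ := min 1 ((r - Sx) / (2 * (Sz - Sx))) with hτ
      have hτ0 : 0 < τ := lt_min one_pos (div_pos (by linarith) (by linarith))
      have hτ1 : τ ≤ 1 := min_le_left _ _
      have hw := hseg x hx z hz τ hτ0 hτ1
      have hwval := hlowQ _ hw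
      rw [hobj x z τ] at hwval
      have h2 : τ * (Sz - Sx) ≤ (r - Sx) / (2 * (Sz - Sx)) * (Sz - Sx) :=
        mul_le_mul_of_nonneg_right (min_le_right _ _) (le_of_lt hd)
      have h3 : (r - Sx) / (2 * (Sz - Sx)) * (Sz - Sx) = (r - Sx) / 2 := by
        field_simp
      rw [← hSx, ← hSz] at hwval
      linarith
  set LA : List (Cst (Fin n)) :=
    (List.finRange m).map (fun i => ((0:ℚ), fun j => A i j, a i)) with hLA
  set LB : List (Cst (Fin n)) :=
    (List.finRange m').map (fun i => ((0:ℚ), fun j => B i j, b i)) with hLB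
  set LO : List (Cst (Fin n)) :=
    [((1:ℚ), fun j => -(c j), 0), ((-1:ℚ), fun j => c j, 0)] with hLO
  set L : List (Cst (Fin n)) := LA ++ (LB ++ LO) with hL
  have hTeq : {t : ℝ | ∃ x, SatL L t x}
      = {t : ℝ | ∃ x, P' x ∧ t = ∑ j, (c j : ℝ) * x j} := by
    ext t
    constructor
    · rintro ⟨x, hx⟩
      have hc1 : holdsC ((1:ℚ), fun j => -(c j), 0) t x := by
        apply hx
        rw [hL]
        exact List.mem_append_right _ (List.mem_append_right _ List.mem_cons_self)
      have hc2 : holdsC ((-1:ℚ), fun j => c j, 0) t x := by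
        apply hx
        rw [hL]
        exact List.mem_append_right _ (List.mem_append_right _
          (List.mem_cons_of_mem _ List.mem_cons_self))
      unfold holdsC at hc1 hc2
      simp only at hc1 hc2
      push_cast at hc1 hc2
      have hsneg : ∑ j, (-(c j) : ℝ) * x j = -(∑ j, (c j : ℝ) * x j) := by
        rw [← Finset.sum_neg_distrib]
        apply Finset.sum_congr rfl
        intro j _
        ring
      rw [hsneg] at hc1
      refine ⟨x, ⟨?_, ?_⟩, by linarith⟩
      · intro i
        have hm : ((0:ℚ), fun j => A i j, a i) ∈ L := by
          rw [hL]
          exact List.mem_append_left _ (List.mem_map.2 ⟨i, List.mem_finRange i, rfl⟩)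
        have h := hx _ hm
        unfold holdsC at h
        simp only at h
        push_cast at h
        show (a i : ℝ) ≤ (A.map _).mulVec x i
        rw [hmvA]
        linarith [h]
      · intro i
        have hm : ((0:ℚ), fun j => B i j, b i) ∈ L := by
          rw [hL]
          exact List.mem_append_right _
            (List.mem_append_left _ (List.mem_map.2 ⟨i, List.mem_finRange i, rfl⟩))
        have h := hx _ hm
        unfold holdsC at h
        simp only at h
        push_cast at h
        show (b i : ℝ) ≤ (B.map _).mulVec x i
        rw [hmvB]
        linarith [h]
    · rintro ⟨x, hxP, rfl⟩
      refine ⟨x, ?_⟩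
      intro p hp
      rw [hL] at hp
      rcases List.mem_append.1 hp with hA' | h2
      · obtain ⟨i, -, rfl⟩ := List.mem_map.1 hA'
        unfold holdsC
        simp only
        have h := hxP.1 i
        rw [hmvA] at h
        push_cast
        linarith [h]
      rcases List.mem_append.1 h2 with hB' | hO'
      · obtain ⟨i, -, rfl⟩ := List.mem_map.1 hB'
        unfold holdsC
        simp only
        have h := hxP.2 i
        rw [hmvB] at h
        push_cast
        linarith [h]
      · have hsneg : ∑ j, (-(c j) : ℝ) * x j = -(∑ j, (c j : ℝ) * x j) := by
          rw [← Finset.sum_neg_distrib]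
          apply Finset.sum_congr rfl
          intro j _
          ring
        rcases List.mem_cons.1 hO' with h | h
        · subst h
          unfold holdsC
          simp only
          push_cast
          rw [hsneg]
          linarith
        · rcases List.mem_cons.1 h with h' | h'
          · subst h'
            unfold holdsC
            simp only
            push_cast
            linarith
          · exact absurd h' List.not_mem_nil
  have hTne : {t : ℝ | ∃ x, SatL L t x}.Nonempty := by
    rw [hTeq]
    obtain ⟨z, hz⟩ := hne
    exact ⟨_, z, hQP z hz, rfl⟩
  have hTbdd : BddBelow {t : ℝ | ∃ x, SatL L t x} := by
    rw [hTeq]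
    refine ⟨r, ?_⟩
    rintro t ⟨x, hxP, rfl⟩
    exact hPlow x hxP
  obtain ⟨q, hqmem, hqlb⟩ := keyFM n (Fin n) (Fintype.card_fin n) L hTne hTbdd
  rw [hTeq] at hqmem hqlb
  obtain ⟨x₀, hx₀P, hx₀val⟩ := hqmem
  have hrq : r = (q : ℝ) := by
    apply le_antisymm
    · rw [hx₀val]
      exact hPlow x₀ hx₀P
    · have h1 : ((q : ℝ) : EReal) ≤ v := by
        rw [hv]
        apply le_iInf
        rintro ⟨x, hx⟩
        have h2 : (q : ℝ) ≤ ∑ j, (c j : ℝ) * x j := hqlb ⟨x, hQP x hx, rfl⟩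
        exact_mod_cast h2
      rw [hr] at h1
      exact_mod_cast h1
  constructor
  · apply le_antisymm
    · apply le_iInf
      rintro ⟨x, hx⟩
      rw [hr]
      have := hPlow x hx
      exact_mod_cast this
    · have h1 : (⨅ x : {x : Fin n → ℝ //
          (fun i => (a i : ℝ)) ≤ (A.map ((↑·) : ℚ → ℝ)).mulVec x ∧
          (fun i => (b i : ℝ)) ≤ (B.map ((↑·) : ℚ → ℝ)).mulVec x},
            ((∑ j, (c j : ℝ) * (x : Fin n → ℝ) j : ℝ) : EReal))
          ≤ ((∑ j, (c j : ℝ) * x₀ j : ℝ) : EReal) := iInf_le _ (⟨x₀, hx₀P⟩ : {x : Fin n → ℝ // P' x})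
      rw [← hx₀val] at h1
      rw [hr, hrq]
      exact h1
  · exact ⟨q, by rw [hr, hrq]⟩
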